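/- If I_ℓ ⊋ ⋯ ⊋ I₀ is a chain of distinct binomial ideals in a commutative monoid algebra k[Q] all inducing the same congruence on Q, then ℓ ≤ 1. -/
import Mathlib


/-! A chain `I_ℓ ⊋ ⋯ ⊋ I₀` of distinct binomial ideals in `k[Q]` all
inducing the same congruence on `Q` has `ℓ ≤ 1`. -/

variable {k : Type*} [Field k] {Q : Type*} [AddCommMonoid Q]

/-- The monomial `t^q` in the monoid algebra `k[Q]`. -/
noncomputable def mono (k : Type*) [Field k] {Q : Type*} [AddCommMonoid Q] (q : Q) :
    AddMonoidAlgebra k Q := AddMonoidAlgebra.single q 1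

/-- A binomial ideal is one generated by binomials `t^u − λ t^v`, `λ ∈ k`
possibly `0`. -/
def IsBinomialIdeal (I : Ideal (AddMonoidAlgebra k Q)) : Prop :=
  ∃ S : Set (AddMonoidAlgebra k Q), I = Ideal.span S ∧
    ∀ f ∈ S, ∃ (u v : Q) (lam : k), f = mono k u - lam • mono k v

/-- The congruence induced by a binomial ideal. -/
def indCong (I : Ideal (AddMonoidAlgebra k Q)) (u v : Q) : Prop :=
  ∃ lam : k, lam ≠ 0 ∧ mono k u - lam • mono k v ∈ I

/-- Scalar multiples by nonzero field elements don't affect ideal membership. -/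
lemma smul_mem_ideal_iff (J : Ideal (AddMonoidAlgebra k Q)) (c : k) (hc : c ≠ 0)
    (x : AddMonoidAlgebra k Q) : c • x ∈ J ↔ x ∈ J := by
  constructor
  · intro hx
    have := J.mul_mem_left (algebraMap k (AddMonoidAlgebra k Q) c⁻¹) hx
    rwa [Algebra.smul_def, ← mul_assoc, ← map_mul, inv_mul_cancel₀ hc, map_one, one_mul] at this
  · intro hx
    rw [Algebra.smul_def]
    exact J.mul_mem_left _ hx

/-- For binomial ideals `A < B` inducing the same congruence, `B` contains a
monomial not in `A`. -/
lemma exists_mono_mem_notMem (A B : Ideal (AddMonoidAlgebra k Q))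
    (hB : IsBinomialIdeal B) (hAB : A < B)
    (hsame : ∀ u v : Q, indCong B u v ↔ indCong A u v) :
    ∃ u : Q, mono k u ∈ B ∧ mono k u ∉ A := by
  by_contra h
  push_neg at h
  obtain ⟨S, hBS, hSbin⟩ := hB
  apply hAB.not_ge
  rw [hBS]
  apply Ideal.span_le.2
  intro f hf
  have hfB : f ∈ B := hBS ▸ Ideal.subset_span hf
  obtain ⟨u, v, lam, rfl⟩ := hSbin f hf
  by_cases hlam : lam = 0
  · rw [hlam, zero_smul, sub_zero] at hfB ⊢
    exact h u hfB
  · have hcong : indCong A u v := (hsame u v).1 ⟨lam, hlam, hfB⟩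
    obtain ⟨mu, hmu, hmuA⟩ := hcong
    by_cases hml : mu = lam
    · exact hml ▸ hmuA
    · -- difference gives a monomial in B
      have hmuB : mono k u - mu • mono k v ∈ B := hAB.le hmuA
      have hdif : (mu - lam) • mono k v ∈ B := by
        have := B.sub_mem hfB hmuB
        convert this using 1
        module
      have hvB : mono k v ∈ B :=
        (smul_mem_ideal_iff B _ (sub_ne_zero.2 hml) _).1 hdif
      have hvA : mono k v ∈ A := h v hvB
      have huA : mono k u ∈ A := by
        have := A.add_mem hmuA ((smul_mem_ideal_iff A mu hmu _).2 hvA)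
        simpa using this
      exact A.sub_mem huA ((smul_mem_ideal_iff A lam hlam _).2 hvA)

/-- If `I 0 ⊊ I 1 ⊊ ⋯ ⊊ I ℓ` are distinct binomial ideals all inducing the
same congruence on `Q`, then `ℓ ≤ 1`. -/
theorem chain_of_binomial_ideals_same_congruence
    (ℓ : ℕ) (I : Fin (ℓ + 1) → Ideal (AddMonoidAlgebra k Q))
    (hbin : ∀ i, IsBinomialIdeal (I i))
    (hchain : ∀ i j : Fin (ℓ + 1), i < j → I i < I j)
    (hsame : ∀ (i j : Fin (ℓ + 1)) (u v : Q), indCong (I i) u v ↔ indCong (I j) u v) :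
    ℓ ≤ 1 := by
  by_contra h
  push_neg at h
  have h2 : 2 ≤ ℓ := h
  set i0 : Fin (ℓ + 1) := ⟨0, by omega⟩
  set i1 : Fin (ℓ + 1) := ⟨1, by omega⟩
  set i2 : Fin (ℓ + 1) := ⟨2, by omega⟩
  have h01 : I i0 < I i1 := hchain _ _ (by simp [i0, i1, Fin.lt_def])
  have h12 : I i1 < I i2 := hchain _ _ (by simp [i1, i2, Fin.lt_def])
  obtain ⟨u, huB, huA⟩ := exists_mono_mem_notMem (I i0) (I i1) (hbin i1) h01
    (fun u v => (hsame i1 i0 u v))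
  obtain ⟨w, hwB, hwA⟩ := exists_mono_mem_notMem (I i1) (I i2) (hbin i2) h12
    (fun u v => (hsame i2 i1 u v))
  have huw : indCong (I i2) u w := by
    refine ⟨1, one_ne_zero, ?_⟩
    rw [one_smul]
    exact (I i2).sub_mem (h12.le huB) hwB
  have huw1 : indCong (I i1) u w := (hsame i2 i1 u w).1 huw
  obtain ⟨mu, hmu, hmem⟩ := huw1
  apply hwA
  have : mu • mono k w ∈ I i1 := by
    have := (I i1).sub_mem huB hmem
    simpa using this
  exact (smul_mem_ideal_iff (I i1) mu hmu _).1 this
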